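/- (Theorem 2, eigenvalue bounds for all normalizations.) For every γ ∈ ℝ (in particular for every γ ∈ [0,1]), every complex eigenvalue λ of G̃_I^{(γ)} is real and satisfies 0 ≤ λ ≤ 1; equivalently, every eigenvalue μ of the generalized Laplacian L̃^{(γ)} = I − G̃_I^{(γ)} is real and satisfies 0 ≤ μ ≤ 1. -/

import Mathlib

open Matrix Polynomial

private lemma exists_eigvec {k : ℕ} (A : Matrix (Fin k) (Fin k) ℝ) (lam : ℂ)
    (h : (A.charpoly.map (algebraMap ℝ ℂ)).IsRoot lam) :
    ∃ v : Fin k → ℂ, v ≠ 0 ∧ (A.map (algebraMap ℝ ℂ)) *ᵥ v = lam • v := by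
  set Aℂ := A.map (algebraMap ℝ ℂ) with hA
  have hc : Aℂ.charpoly = A.charpoly.map (algebraMap ℝ ℂ) := Matrix.charpoly_map A _
  have heval : Polynomial.eval lam Aℂ.charpoly = 0 := by rw [hc]; exact h
  have hmap : (charmatrix Aℂ).map (Polynomial.evalRingHom lam) = Matrix.scalar (Fin k) lam - Aℂ := by
    ext i j
    by_cases hij : i = j <;>
      simp [hij, charmatrix_apply, Matrix.scalar_apply, Matrix.diagonal_apply, Matrix.sub_apply]
  have h0 : (Matrix.scalar (Fin k) lam - Aℂ).det = 0 := by
    rw [← hmap, ← RingHom.mapMatrix_apply, ← RingHom.map_det]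
    exact heval
  obtain ⟨v, hv0, hv⟩ := (Matrix.exists_mulVec_eq_zero_iff).2 h0
  refine ⟨v, hv0, ?_⟩
  rw [Matrix.sub_mulVec] at hv
  have hs : Matrix.scalar (Fin k) lam *ᵥ v = lam • v := by
    ext i
    simp [Matrix.scalar_apply, Matrix.mulVec_diagonal]
  rw [hs] at hv
  exact (sub_eq_zero.mp hv).symm

open Complex Finset in
private lemma scalar_id (a b d x y γ : ℝ) (ha : 0 < a) (hb : 0 < b) (hd : 0 < d) :
    (a ^ γ / Real.sqrt a) * ((a ^ (-γ) * x * d⁻¹ * y) * b ^ (γ - 1)) =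
      (x / (Real.sqrt d * Real.sqrt a)) * (y / (Real.sqrt d * Real.sqrt b)) * (b ^ γ / Real.sqrt b) := by
  have hsa : Real.sqrt a * Real.sqrt a = a := Real.mul_self_sqrt ha.le
  have hsb : Real.sqrt b * Real.sqrt b = b := Real.mul_self_sqrt hb.le
  have hsd : Real.sqrt d * Real.sqrt d = d := Real.mul_self_sqrt hd.le
  have hsa0 : Real.sqrt a ≠ 0 := (Real.sqrt_pos.mpr ha).ne'
  have hsb0 : Real.sqrt b ≠ 0 := (Real.sqrt_pos.mpr hb).ne'
  have hsd0 : Real.sqrt d ≠ 0 := (Real.sqrt_pos.mpr hd).ne'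
  have haγ : a ^ γ ≠ 0 := (Real.rpow_pos_of_pos ha γ).ne'
  have hbγ : b ^ γ ≠ 0 := (Real.rpow_pos_of_pos hb γ).ne'
  have ha0 : a ≠ 0 := ha.ne'
  have hb0 : b ≠ 0 := hb.ne'
  have hd0 : d ≠ 0 := hd.ne'
  rw [Real.rpow_neg ha.le, Real.rpow_sub hb, Real.rpow_one]
  field_simp
  linear_combination (x * y * Real.sqrt b ^ 2) * hsd
    + (x * y * d) * hsb

open Complex Finset in
private lemma core_bound (m n : ℕ) (R : Matrix (Fin m) (Fin n) ℝ)
    (hR : ∀ u i, 0 ≤ R u i)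
    (dU : Fin m → ℝ) (dI : Fin n → ℝ)
    (hdU : ∀ u, 0 < dU u) (hdI : ∀ i, 0 < dI i)
    (hrow : ∀ u, ∑ i, R u i = dU u) (hcol : ∀ i, ∑ u, R u i = dI i)
    (γ : ℝ) (lam : ℂ) (v : Fin n → ℂ) (hv : v ≠ 0)
    (heig : ∀ i, (∑ j, (((∑ u, dI i ^ (-γ) * R u i * (dU u)⁻¹ * R u j) * dI j ^ (γ - 1) : ℝ) : ℂ) * v j)
      = lam * v i) :
    lam.im = 0 ∧ 0 ≤ lam.re ∧ lam.re ≤ 1 := by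
  classical
  -- abbreviations (plain lambdas, no `set`)
  let B : Fin m → Fin n → ℝ := fun u i => R u i / (Real.sqrt (dU u) * Real.sqrt (dI i))
  let c : Fin n → ℝ := fun i => dI i ^ γ / Real.sqrt (dI i)
  let S : Fin n → Fin n → ℝ := fun i j => ∑ u, B u i * B u j
  let w : Fin n → ℂ := fun i => ((c i : ℝ) : ℂ) * v i
  have hB0 : ∀ u i, 0 ≤ B u i := fun u i =>
    div_nonneg (hR u i) (mul_nonneg (Real.sqrt_nonneg _) (Real.sqrt_nonneg _))
  have hcpos : ∀ i, 0 < c i := fun i =>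
    div_pos (Real.rpow_pos_of_pos (hdI i) γ) (Real.sqrt_pos.mpr (hdI i))
  -- key conjugation identity
  have hkey : ∀ i j, c i * ((∑ u, dI i ^ (-γ) * R u i * (dU u)⁻¹ * R u j) * dI j ^ (γ - 1))
      = S i j * c j := by
    intro i j
    show c i * ((∑ u, dI i ^ (-γ) * R u i * (dU u)⁻¹ * R u j) * dI j ^ (γ - 1))
      = (∑ u, B u i * B u j) * c j
    simp only [Finset.sum_mul, Finset.mul_sum]
    refine Finset.sum_congr rfl fun u _ => ?_
    have h := scalar_id (dI i) (dI j) (dU u) (R u i) (R u j) γ (hdI i) (hdI j) (hdU u)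
    show c i * (dI i ^ (-γ) * R u i * (dU u)⁻¹ * R u j * dI j ^ (γ - 1)) = B u i * B u j * c j
    calc c i * (dI i ^ (-γ) * R u i * (dU u)⁻¹ * R u j * dI j ^ (γ - 1))
        = (dI i ^ γ / Real.sqrt (dI i)) *
            ((dI i ^ (-γ) * R u i * (dU u)⁻¹ * R u j) * dI j ^ (γ - 1)) := by ring
      _ = B u i * B u j * c j := h
  -- transported eigen-equation
  have heig2 : ∀ i, (∑ j, ((S i j : ℝ) : ℂ) * w j) = lam * w i := by
    intro i
    have step : ∀ j, ((S i j : ℝ) : ℂ) * w j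
        = ((c i : ℝ) : ℂ) * ((((∑ u, dI i ^ (-γ) * R u i * (dU u)⁻¹ * R u j) * dI j ^ (γ - 1) : ℝ) : ℂ) * v j) := by
      intro j
      have h := congrArg (fun t : ℝ => (t : ℂ)) (hkey i j)
      simp only [Complex.ofReal_mul] at h
      show ((S i j : ℝ) : ℂ) * (((c j : ℝ) : ℂ) * v j) = _
      rw [← mul_assoc, ← h]
      push_cast
      ring
    calc (∑ j, ((S i j : ℝ) : ℂ) * w j)
        = ∑ j, ((c i : ℝ) : ℂ) * ((((∑ u, dI i ^ (-γ) * R u i * (dU u)⁻¹ * R u j) * dI j ^ (γ - 1) : ℝ) : ℂ) * v j) :=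
          Finset.sum_congr rfl fun j _ => step j
      _ = ((c i : ℝ) : ℂ) * ∑ j, (((∑ u, dI i ^ (-γ) * R u i * (dU u)⁻¹ * R u j) * dI j ^ (γ - 1) : ℝ) : ℂ) * v j := by
          rw [Finset.mul_sum]
      _ = ((c i : ℝ) : ℂ) * (lam * v i) := by rw [heig i]
      _ = lam * w i := by show _ = lam * (((c i : ℝ) : ℂ) * v i); ring
  -- quadratic form computation
  let t : Fin m → ℂ := fun u => ∑ i, ((B u i : ℝ) : ℂ) * w i
  let T : ℝ := ∑ u, Complex.normSq (t u)
  let W : ℝ := ∑ i, Complex.normSq (w i)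
  have hTW : (T : ℂ) = lam * (W : ℂ) := by
    have h3 : ∀ i, (∑ u, ((B u i : ℝ) : ℂ) * t u) = lam * w i := by
      intro i
      have e : (∑ u, ((B u i : ℝ) : ℂ) * t u) = ∑ j, ((S i j : ℝ) : ℂ) * w j := by
        show (∑ u, ((B u i : ℝ) : ℂ) * ∑ j, ((B u j : ℝ) : ℂ) * w j)
          = ∑ j, (((∑ u, B u i * B u j : ℝ)) : ℂ) * w j
        simp only [Finset.mul_sum, Complex.ofReal_sum, Finset.sum_mul]
        rw [Finset.sum_comm]
        refine Finset.sum_congr rfl fun j _ => Finset.sum_congr rfl fun u _ => ?_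
        push_cast
        ring
      rw [e, heig2 i]
    calc (T : ℂ) = ∑ u, ((Complex.normSq (t u) : ℝ) : ℂ) := by
          show ((∑ u, Complex.normSq (t u) : ℝ) : ℂ) = _
          push_cast
          rfl
      _ = ∑ u, (starRingEnd ℂ) (t u) * t u :=
          Finset.sum_congr rfl fun u _ => Complex.normSq_eq_conj_mul_self
      _ = ∑ u, ∑ i, (starRingEnd ℂ) (w i) * (((B u i : ℝ) : ℂ) * t u) := by
          refine Finset.sum_congr rfl fun u _ => ?_
          show (starRingEnd ℂ) (∑ i, ((B u i : ℝ) : ℂ) * w i) * t u = _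
          rw [map_sum, Finset.sum_mul]
          refine Finset.sum_congr rfl fun i _ => ?_
          rw [_root_.map_mul, Complex.conj_ofReal]
          ring
      _ = ∑ i, (starRingEnd ℂ) (w i) * (∑ u, ((B u i : ℝ) : ℂ) * t u) := by
          rw [Finset.sum_comm]
          exact Finset.sum_congr rfl fun i _ => (Finset.mul_sum _ _ _).symm
      _ = ∑ i, (starRingEnd ℂ) (w i) * (lam * w i) :=
          Finset.sum_congr rfl fun i _ => by rw [h3 i]
      _ = lam * ∑ i, (starRingEnd ℂ) (w i) * w i := by
          rw [Finset.mul_sum]; exact Finset.sum_congr rfl fun i _ => by ring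
      _ = lam * (W : ℂ) := by
          show _ = lam * ((∑ i, Complex.normSq (w i) : ℝ) : ℂ)
          push_cast
          congr 1
          exact Finset.sum_congr rfl fun i _ => Complex.normSq_eq_conj_mul_self.symm
  -- positivity of W
  have hW : 0 < W := by
    obtain ⟨i, hi⟩ : ∃ i, v i ≠ 0 := by
      by_contra h; push_neg at h; exact hv (funext h)
    have hwi : w i ≠ 0 :=
      mul_ne_zero (Complex.ofReal_ne_zero.mpr (hcpos i).ne') hi
    exact Finset.sum_pos' (fun j _ => Complex.normSq_nonneg _)
      ⟨i, Finset.mem_univ i, Complex.normSq_pos.mpr hwi⟩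
  have hT0 : 0 ≤ T := Finset.sum_nonneg fun u _ => Complex.normSq_nonneg _
  -- Cauchy–Schwarz bound : T ≤ W
  have hCS : ∀ x : Fin n → ℝ, (∑ u, (∑ i, B u i * x i) ^ 2) ≤ ∑ i, x i ^ 2 := by
    intro x
    have hu : ∀ u, (∑ i, B u i * x i) ^ 2 ≤ ∑ i, R u i / dI i * x i ^ 2 := by
      intro u
      have hcs := Finset.sum_mul_sq_le_sq_mul_sq Finset.univ
        (fun i => Real.sqrt (R u i / dU u)) (fun i => Real.sqrt (R u i / dI i) * x i)
      have e1 : ∀ i, Real.sqrt (R u i / dU u) * (Real.sqrt (R u i / dI i) * x i) = B u i * x i := by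
        intro i
        have hB : B u i = Real.sqrt (R u i / dU u) * Real.sqrt (R u i / dI i) := by
          show R u i / (Real.sqrt (dU u) * Real.sqrt (dI i)) = _
          rw [Real.sqrt_div (hR u i), Real.sqrt_div (hR u i), div_mul_div_comm,
            Real.mul_self_sqrt (hR u i)]
        rw [hB]; ring
      have e2 : (∑ i, Real.sqrt (R u i / dU u) ^ 2) = 1 := by
        have : ∀ i, Real.sqrt (R u i / dU u) ^ 2 = R u i / dU u := fun i =>
          Real.sq_sqrt (div_nonneg (hR u i) (hdU u).le)
        rw [Finset.sum_congr rfl fun i _ => this i, ← Finset.sum_div, hrow,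
          div_self (hdU u).ne']
      have e3 : ∀ i, (Real.sqrt (R u i / dI i) * x i) ^ 2 = R u i / dI i * x i ^ 2 := by
        intro i
        rw [mul_pow, Real.sq_sqrt (div_nonneg (hR u i) (hdI i).le)]
      calc (∑ i, B u i * x i) ^ 2
          = (∑ i, Real.sqrt (R u i / dU u) * (Real.sqrt (R u i / dI i) * x i)) ^ 2 := by
            rw [Finset.sum_congr rfl fun i _ => e1 i]
        _ ≤ (∑ i, Real.sqrt (R u i / dU u) ^ 2) * ∑ i, (Real.sqrt (R u i / dI i) * x i) ^ 2 := hcs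
        _ = ∑ i, R u i / dI i * x i ^ 2 := by
            rw [e2, one_mul]
            exact Finset.sum_congr rfl fun i _ => e3 i
    calc (∑ u, (∑ i, B u i * x i) ^ 2)
        ≤ ∑ u, ∑ i, R u i / dI i * x i ^ 2 := Finset.sum_le_sum fun u _ => hu u
      _ = ∑ i, (∑ u, R u i) / dI i * x i ^ 2 := by
          rw [Finset.sum_comm]
          refine Finset.sum_congr rfl fun i _ => ?_
          rw [Finset.sum_div, Finset.sum_mul]
      _ = ∑ i, x i ^ 2 := by
          refine Finset.sum_congr rfl fun i _ => ?_
          rw [hcol, div_self (hdI i).ne', one_mul]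
  -- conclusion
  have hTleW : T ≤ W := by
    have habs : ∀ u, Complex.normSq (t u) ≤ (∑ i, B u i * ‖w i‖) ^ 2 := by
      intro u
      have h1 : ‖t u‖ ≤ ∑ i, B u i * ‖w i‖ := by
        refine le_trans (norm_sum_le _ _) (le_of_eq (Finset.sum_congr rfl fun i _ => ?_))
        rw [norm_mul, Complex.norm_real, Real.norm_eq_abs, _root_.abs_of_nonneg (hB0 u i)]
      calc Complex.normSq (t u) = ‖t u‖ ^ 2 := (Complex.sq_norm _).symm
        _ ≤ (∑ i, B u i * ‖w i‖) ^ 2 :=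
            pow_le_pow_left₀ (norm_nonneg _) h1 2
    calc T ≤ ∑ u, (∑ i, B u i * ‖w i‖) ^ 2 := Finset.sum_le_sum fun u _ => habs u
      _ ≤ ∑ i, ‖w i‖ ^ 2 := hCS fun i => ‖w i‖
      _ = W := Finset.sum_congr rfl fun i _ => Complex.sq_norm _
  have hWne : ((W : ℝ) : ℂ) ≠ 0 := Complex.ofReal_ne_zero.mpr hW.ne'
  have hlam : lam = (((T / W : ℝ)) : ℂ) := by
    rw [Complex.ofReal_div]
    rw [eq_div_iff hWne]
    exact hTW.symm
  refine ⟨by rw [hlam]; simp, ?_, ?_⟩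
  · rw [hlam]; simp only [Complex.ofReal_re]
    exact div_nonneg hT0 hW.le
  · rw [hlam]; simp only [Complex.ofReal_re]
    exact (div_le_one hW).mpr hTleW

/-- Theorem 2 (eigenvalue bounds for all normalizations): for every `γ : ℝ`, every
complex eigenvalue `λ` of `G̃_I^{(γ)} = D_I^{−γ} Rᵀ D_U^{−1} R D_I^{γ−1}` (a root of its
characteristic polynomial over `ℂ`) is real and satisfies `0 ≤ λ ≤ 1`; equivalently,
every eigenvalue `μ` of the generalized Laplacian `L̃^{(γ)} = I − G̃_I^{(γ)}` is real
and satisfies `0 ≤ μ ≤ 1`. -/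
theorem generalized_gram_eigenvalues_in_unit_interval
    (m n : ℕ) (hm : 0 < m) (hn : 0 < n)
    (R : Matrix (Fin m) (Fin n) ℝ)
    (hR : ∀ u i, 0 ≤ R u i)
    (hdU : ∀ u, 0 < ∑ i, R u i)
    (hdI : ∀ i, 0 < ∑ u, R u i)
    (γ : ℝ) :
    let DI : ℝ → Matrix (Fin n) (Fin n) ℝ :=
      fun s => Matrix.diagonal (fun i => (∑ u, R u i) ^ s)
    let DU : ℝ → Matrix (Fin m) (Fin m) ℝ :=
      fun s => Matrix.diagonal (fun u => (∑ i, R u i) ^ s)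
    let G := DI (-γ) * Rᵀ * DU (-1) * R * DI (γ - 1)
    (∀ lam : ℂ, (G.charpoly.map (algebraMap ℝ ℂ)).IsRoot lam →
        lam.im = 0 ∧ 0 ≤ lam.re ∧ lam.re ≤ 1) ∧
    (∀ mu : ℂ, ((1 - G).charpoly.map (algebraMap ℝ ℂ)).IsRoot mu →
        mu.im = 0 ∧ 0 ≤ mu.re ∧ mu.re ≤ 1) := by
  intro DI DU G
  -- entrywise formula for G
  have hGapp : ∀ i j, G i j
      = (∑ u, (∑ u', R u' i) ^ (-γ) * R u i * (∑ i', R u i')⁻¹ * R u j) * (∑ u', R u' j) ^ (γ - 1) := by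
    intro i j
    show (DI (-γ) * Rᵀ * DU (-1) * R * DI (γ - 1)) i j = _
    rw [Matrix.mul_diagonal, Matrix.mul_apply]
    congr 1
    refine Finset.sum_congr rfl fun u _ => ?_
    rw [Matrix.mul_diagonal, Matrix.diagonal_mul, Matrix.transpose_apply, Real.rpow_neg_one]
  -- scalar eigen-equation from a matrix eigenvector
  have main : ∀ (lam : ℂ) (v : Fin n → ℂ), v ≠ 0 →
      (G.map (algebraMap ℝ ℂ)) *ᵥ v = lam • v →
      lam.im = 0 ∧ 0 ≤ lam.re ∧ lam.re ≤ 1 := by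
    intro lam v hv hvec
    refine core_bound m n R hR (fun u => ∑ i, R u i) (fun i => ∑ u, R u i)
      hdU hdI (fun u => rfl) (fun i => rfl) γ lam v hv ?_
    intro i
    have := congrFun hvec i
    rw [Matrix.mulVec, dotProduct] at this
    simp only [Pi.smul_apply, smul_eq_mul] at this
    rw [← this]
    refine Finset.sum_congr rfl fun j _ => ?_
    rw [Matrix.map_apply, hGapp i j]
    rfl
  constructor
  · intro lam hroot
    obtain ⟨v, hv0, hvec⟩ := exists_eigvec G lam hroot
    exact main lam v hv0 hvec
  · intro mu hroot
    obtain ⟨v, hv0, hvec⟩ := exists_eigvec (1 - G) mu hroot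
    have hvec' : (G.map (algebraMap ℝ ℂ)) *ᵥ v = (1 - mu) • v := by
      have h1 : (1 - G).map (algebraMap ℝ ℂ) = 1 - G.map (algebraMap ℝ ℂ) := by
        simp [Matrix.map_sub, Matrix.map_one]
      rw [h1, Matrix.sub_mulVec, Matrix.one_mulVec] at hvec
      have h2 := sub_eq_iff_eq_add.mp hvec
      rw [sub_smul, one_smul]
      exact eq_sub_of_add_eq (by rw [add_comm]; exact h2.symm)
    obtain ⟨him, h0, h1⟩ := main (1 - mu) v hv0 hvec'
    refine ⟨?_, ?_, ?_⟩
    · have : (1 - mu).im = -mu.im := by simp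
      rw [this] at him; linarith
    · have : (1 - mu).re = 1 - mu.re := by simp
      rw [this] at h1; linarith
    · have : (1 - mu).re = 1 - mu.re := by simp
      rw [this] at h0; linarith
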